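/- Suppose y = (a,b,c) ∈ ℍⁿ with a, b ∈ ℝⁿ, c ∈ ℝ and p(y) ≠ 0; let L = |p(y)| = |(a,b)|. Define γ : [0,1] → ℍⁿ by γ(t) = t(a − bc/L², b + ac/L², 0) for 0 ≤ t ≤ 1/2, and γ(t) = (1/2)(a − bc/L², b + ac/L², 0) + (t − 1/2)(a + bc/L², b − ac/L², 2c) for 1/2 < t ≤ 1. Then: (1) γ is a Lipschitz horizontal curve joining 0 to y; (2) Lip_ℍ(γ) ≤ L(1 + c²/L⁴ + 4c²/L²)^{1/2}; (3) for all t ∈ [0,1] \ {1/2}, γ'(t) exists and |γ'(t) − (a,b,0)| ≤ (|c|/L)(1 + 4L²)^{1/2}. -/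

import Mathlib

open MeasureTheory Filter Set

noncomputable section

/-- The underlying space of the Heisenberg group `ℍⁿ = ℝ^{2n+1}` with the Euclidean structure. -/
abbrev H (n : ℕ) : Type := EuclideanSpace ℝ (Fin (2*n+1))

namespace Heis

variable (n : ℕ)

/-- Index of the `i`-th coordinate of the first block `a ∈ ℝⁿ`. -/
def idx₁ (i : Fin n) : Fin (2*n+1) := ⟨i.1, by have := i.2; omega⟩

/-- Index of the `i`-th coordinate of the second block `b ∈ ℝⁿ`. -/
def idx₂ (i : Fin n) : Fin (2*n+1) := ⟨n + i.1, by have := i.2; omega⟩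

/-- Index of the last (vertical) coordinate `c`. -/
def idxc : Fin (2*n+1) := ⟨2*n, by omega⟩

/-- Projection `p : ℍⁿ → ℝ^{2n}` onto the first `2n` coordinates. -/
def proj (x : H n) : EuclideanSpace ℝ (Fin (2*n)) :=
  WithLp.toLp 2 <| fun k => x ⟨k.1, by have := k.2; omega⟩

/-- The Euclidean inner product. -/
def iprod {m : ℕ} (x y : EuclideanSpace ℝ (Fin m)) : ℝ := ∑ k, x k * y k

/-- The Heisenberg group law
`(a,b,c)·(a',b',c') = (a+a', b+b', c+c'−2(⟨a,b'⟩−⟨b,a'⟩))`. -/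
def Hmul (x y : H n) : H n := WithLp.toLp 2 <| fun k =>
  x k + y k - (if (k : ℕ) = 2*n then
    2 * ∑ i : Fin n, (x (idx₁ n i) * y (idx₂ n i) - x (idx₂ n i) * y (idx₁ n i)) else 0)

/-- Dilations `δ_r(a,b,c) = (ra, rb, r²c)`. -/
def dil (r : ℝ) (x : H n) : H n :=
  WithLp.toLp 2 <| fun k => if (k : ℕ) = 2*n then r^2 * x k else r * x k

/-- The horizontal vector field `X_i(a,b,c) = e_i + 2 b_i e_{2n+1}`. -/
def Xvf (i : Fin n) (x : H n) : H n :=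
  EuclideanSpace.single (idx₁ n i) 1 + (2 * x (idx₂ n i)) • EuclideanSpace.single (idxc n) 1

/-- The horizontal vector field `Y_i(a,b,c) = e_{n+i} − 2 a_i e_{2n+1}`. -/
def Yvf (i : Fin n) (x : H n) : H n :=
  EuclideanSpace.single (idx₂ n i) 1 - (2 * x (idx₁ n i)) • EuclideanSpace.single (idxc n) 1

/-- `E ∈ V = Span{X_i, Y_i : 1 ≤ i ≤ n}`. -/
def memV (E : H n → H n) : Prop :=
  ∃ q q' : Fin n → ℝ, ∀ x, E x = ∑ i, (q i • Xvf n i x + q' i • Yvf n i x)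

/-- The norm `ω` on `V` making `{X_i, Y_i}` orthonormal; equivalently `ω(E) = |p(E)|`. -/
def omega (E : H n → H n) : ℝ := ‖proj n (E 0)‖

/-- `γ` is absolutely continuous on `I`: differentiable a.e. on `I` and
`γ(t) − γ(s) = ∫_s^t γ'` for all `s, t ∈ I`. -/
def IsAC (I : Set ℝ) (γ : ℝ → H n) : Prop :=
  (∀ᵐ t ∂(volume.restrict I), DifferentiableAt ℝ γ t) ∧
  ∀ s ∈ I, ∀ t ∈ I, IntervalIntegrable (deriv γ) volume s t ∧
    γ t - γ s = ∫ u in s..t, deriv γ u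

/-- The pointwise horizontality condition
`γ'(t) = ∑ᵢ (hᵢ(t) Xᵢ(γ(t)) + h_{n+i}(t) Yᵢ(γ(t)))`. -/
def horizCondition (γ : ℝ → H n) (h : ℝ → Fin (2*n) → ℝ) (t : ℝ) : Prop :=
  deriv γ t = ∑ i : Fin n,
    (h t ⟨i.1, by have := i.2; omega⟩ • Xvf n i (γ t)
      + h t ⟨n + i.1, by have := i.2; omega⟩ • Yvf n i (γ t))

/-- `γ` satisfies the horizontality condition a.e. on `I` for some `h : I → ℝ^{2n}`. -/
def IsHorizontal (I : Set ℝ) (γ : ℝ → H n) : Prop :=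
  ∃ h : ℝ → Fin (2*n) → ℝ, ∀ᵐ t ∂(volume.restrict I), horizCondition n γ h t

/-- A horizontal curve: absolutely continuous and horizontal on `I`. -/
def IsHorizontalCurve (I : Set ℝ) (γ : ℝ → H n) : Prop :=
  IsAC n I γ ∧ IsHorizontal n I γ

/-- The horizontal length `L_ℍ(γ) = ∫_I |h| = ∫_I |(p ∘ γ)'|`. -/
def hLength (I : Set ℝ) (γ : ℝ → H n) : ℝ := ∫ t in I, ‖proj n (deriv γ t)‖

/-- The Carnot–Carathéodory distance:
the infimum of horizontal lengths of horizontal curves joining `x` to `y`. -/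
def ccDist (x y : H n) : ℝ :=
  sInf {L | ∃ (a b : ℝ) (γ : ℝ → H n), a < b ∧ IsHorizontalCurve n (Set.Icc a b) γ ∧
    γ a = x ∧ γ b = y ∧ L = hLength n (Set.Icc a b) γ}

/-- `f` is Lipschitz with respect to the Carnot–Carathéodory distance. -/
def LipschitzCC (f : H n → ℝ) : Prop :=
  ∃ K : ℝ, 0 ≤ K ∧ ∀ x y, |f x - f y| ≤ K * ccDist n x y

/-- The Lipschitz constant `Lip_ℍ(f)` with respect to the Carnot–Carathéodory distance. -/
def lipH (f : H n → ℝ) : ℝ :=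
  sInf {K | 0 ≤ K ∧ ∀ x y, |f x - f y| ≤ K * ccDist n x y}

/-- The directional derivative `Ef(x) = lim_{t→0} (f(x + tE(x)) − f(x))/t` exists and is `D`. -/
def HasDirDeriv (f : H n → ℝ) (E : H n → H n) (x : H n) (D : ℝ) : Prop :=
  Tendsto (fun t : ℝ => (f (x + t • E x) - f x) / t) (nhdsWithin 0 {(0:ℝ)}ᶜ) (nhds D)

/-- `L : ℍⁿ → ℝ` is ℍ-linear: `L(xy) = L(x)+L(y)` and `L(δ_r x) = r L(x)` for `r > 0`. -/
def IsHLinear (L : H n → ℝ) : Prop :=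
  (∀ x y, L (Hmul n x y) = L x + L y) ∧ ∀ r : ℝ, 0 < r → ∀ x, L (dil n r x) = r * L x

/-- `f` is Pansu differentiable at `x` with (ℍ-linear) Pansu derivative `L`:
`lim_{y→x} |f(y) − f(x) − L(x⁻¹y)|/d(x,y) = 0`, where `x⁻¹ = −x`. -/
def PansuDiffAt (f : H n → ℝ) (x : H n) (L : H n → ℝ) : Prop :=
  IsHLinear n L ∧
  Tendsto (fun y => |f y - f x - L (Hmul n (-x) y)| / ccDist n x y)
    (nhdsWithin x {x}ᶜ) (nhds 0)

/-- `x ∈ ℚ^{2n+1}`: all coordinates rational. -/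
def isRat (x : H n) : Prop := ∀ k, ∃ q : ℚ, x k = (q : ℝ)

/-- Build the point `(a, b, c) ∈ ℍⁿ` from `a, b ∈ ℝⁿ` and `c ∈ ℝ`. -/
def mkH (a b : Fin n → ℝ) (c : ℝ) : H n := WithLp.toLp 2 <| fun k =>
  if h : (k : ℕ) < n then a ⟨k.1, h⟩
  else if h' : (k : ℕ) < 2*n then b ⟨k.1 - n, by omega⟩ else c

/-- First segment direction `(a − bc/L², b + ac/L², 0)` of the good curve to `y = (a,b,c)`. -/
def w₁ (y : H n) : H n :=
  mkH n (fun i => y (idx₁ n i) - y (idx₂ n i) * y (idxc n) / ‖proj n y‖^2)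
        (fun i => y (idx₂ n i) + y (idx₁ n i) * y (idxc n) / ‖proj n y‖^2) 0

/-- Second segment direction `(a + bc/L², b − ac/L², 2c)` of the good curve to `y = (a,b,c)`. -/
def w₂ (y : H n) : H n :=
  mkH n (fun i => y (idx₁ n i) + y (idx₂ n i) * y (idxc n) / ‖proj n y‖^2)
        (fun i => y (idx₂ n i) - y (idx₁ n i) * y (idxc n) / ‖proj n y‖^2) (2 * y (idxc n))

/-- The piecewise-linear horizontal curve `γ_y` joining `0` to `y`. -/
def goodCurve (y : H n) : ℝ → H n := fun t =>
  if t ≤ 1/2 then t • w₁ n y else (1/2 : ℝ) • w₁ n y + (t - 1/2) • w₂ n y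

end Heis


set_option linter.unusedSectionVars false
set_option maxHeartbeats 1000000

namespace Aux
open Heis
open Heis
variable {n : ℕ}

lemma sum_split (f : Fin (2*n+1) → ℝ) :
    ∑ k, f k = ∑ i : Fin n, f (idx₁ n i) + ∑ i : Fin n, f (idx₂ n i) + f (idxc n) := by
  have h : 2*n+1 = n+n+1 := by omega
  rw [← Fintype.sum_equiv (finCongr h.symm) (fun k => f (finCongr h.symm k)) f (fun k => rfl),
    Fin.sum_univ_castSucc, Fin.sum_univ_add]
  have e1 : ∀ i : Fin n, f (finCongr h.symm ((Fin.castAdd n i).castSucc)) = f (idx₁ n i) :=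
    fun i => congrArg f (Fin.ext (by simp [idx₁]))
  have e2 : ∀ i : Fin n, f (finCongr h.symm ((Fin.natAdd n i).castSucc)) = f (idx₂ n i) :=
    fun i => congrArg f (Fin.ext (by simp [idx₂, Nat.add_comm]))
  have e3 : f (finCongr h.symm (Fin.last (n+n))) = f (idxc n) :=
    congrArg f (Fin.ext (by simp [idxc, Nat.two_mul]))
  rw [Finset.sum_congr rfl (fun i _ => e1 i), Finset.sum_congr rfl (fun i _ => e2 i), e3]

lemma sum_split2 (f : Fin (2*n) → ℝ) :
    ∑ k, f k = ∑ i : Fin n, f ⟨i.1, by have := i.2; omega⟩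
      + ∑ i : Fin n, f ⟨n + i.1, by have := i.2; omega⟩ := by
  have h : 2*n = n+n := by omega
  rw [← Fintype.sum_equiv (finCongr h.symm) (fun k => f (finCongr h.symm k)) f (fun k => rfl),
    Fin.sum_univ_add]
  refine congrArg₂ (· + ·) ?_ ?_
  · exact Finset.sum_congr rfl fun i _ => congrArg f (Fin.ext (by simp))
  · exact Finset.sum_congr rfl fun i _ => congrArg f (Fin.ext (by simp [Nat.add_comm]))

lemma mkH_idx₁ (a b : Fin n → ℝ) (c : ℝ) (i : Fin n) : mkH n a b c (idx₁ n i) = a i := by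
  have : (idx₁ n i : ℕ) < n := i.2
  simp only [mkH, idx₁, dif_pos this]
  rw [dif_pos i.2]

lemma mkH_idx₂ (a b : Fin n → ℝ) (c : ℝ) (i : Fin n) : mkH n a b c (idx₂ n i) = b i := by
  have h1 : ¬ ((idx₂ n i : ℕ) < n) := by simp [idx₂]
  have h2 : ((idx₂ n i : ℕ) < 2*n) := by have := i.2; simp [idx₂]; omega
  simp only [mkH, dif_neg h1, dif_pos h2]
  congr 1
  exact Fin.ext (by simp [idx₂])

lemma mkH_idxc (a b : Fin n → ℝ) (c : ℝ) : mkH n a b c (idxc n) = c := by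
  have h1 : ¬ ((idxc n : ℕ) < n) := by simp [idxc]; omega
  have h2 : ¬ ((idxc n : ℕ) < 2*n) := by simp [idxc]
  simp only [mkH, dif_neg h1, dif_neg h2]

lemma extH {x z : H n} (h₁ : ∀ i, x (idx₁ n i) = z (idx₁ n i))
    (h₂ : ∀ i, x (idx₂ n i) = z (idx₂ n i)) (hc : x (idxc n) = z (idxc n)) : x = z := by
  ext k
  by_cases h : k.1 < n
  · have hk : k = idx₁ n ⟨k.1, h⟩ := Fin.ext rfl
    rw [hk]; exact h₁ _
  · by_cases h' : k.1 < 2*n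
    · have hk : k = idx₂ n ⟨k.1 - n, by omega⟩ := Fin.ext (by simp [idx₂]; omega)
      rw [hk]; exact h₂ _
    · have hk : k = idxc n := Fin.ext (by simp [idxc]; omega)
      rw [hk]; exact hc

lemma normH (x : H n) :
    ‖x‖ = Real.sqrt (∑ i, x (idx₁ n i)^2 + ∑ i, x (idx₂ n i)^2 + x (idxc n)^2) := by
  rw [EuclideanSpace.norm_eq]
  congr 1
  simp only [Real.norm_eq_abs, sq_abs]
  exact sum_split _

lemma normProj (x : H n) :
    ‖proj n x‖ = Real.sqrt (∑ i, x (idx₁ n i)^2 + ∑ i, x (idx₂ n i)^2) := by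
  rw [EuclideanSpace.norm_eq]
  congr 1
  simp only [Real.norm_eq_abs, sq_abs]
  exact sum_split2 _

@[simp] lemma idx₁_eq_idx₁ (i j : Fin n) : idx₁ n i = idx₁ n j ↔ i = j := by
  simp [idx₁, Fin.ext_iff]

@[simp] lemma idx₂_eq_idx₂ (i j : Fin n) : idx₂ n i = idx₂ n j ↔ i = j := by
  simp [idx₂, Fin.ext_iff]

@[simp] lemma idx₁_ne_idx₂ (i j : Fin n) : ¬ (idx₁ n i = idx₂ n j) := by
  have := i.2; simp [idx₁, idx₂, Fin.ext_iff]; omega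

@[simp] lemma idx₂_ne_idx₁ (i j : Fin n) : ¬ (idx₂ n i = idx₁ n j) := by
  have := j.2; simp [idx₁, idx₂, Fin.ext_iff]; omega

@[simp] lemma idx₁_ne_idxc (i : Fin n) : ¬ (idx₁ n i = idxc n) := by
  have := i.2; simp [idx₁, idxc, Fin.ext_iff]; omega

@[simp] lemma idx₂_ne_idxc (i : Fin n) : ¬ (idx₂ n i = idxc n) := by
  have := i.2; simp [idx₂, idxc, Fin.ext_iff]; omega

@[simp] lemma idxc_ne_idx₁ (i : Fin n) : ¬ (idxc n = idx₁ n i) := by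
  have := i.2; simp [idx₁, idxc, Fin.ext_iff]; omega

@[simp] lemma idxc_ne_idx₂ (i : Fin n) : ¬ (idxc n = idx₂ n i) := by
  have := i.2; simp [idx₂, idxc, Fin.ext_iff]; omega

lemma sumXY (w P : H n) :
    (∑ i : Fin n, (w (idx₁ n i) • Xvf n i P + w (idx₂ n i) • Yvf n i P))
      = mkH n (fun i => w (idx₁ n i)) (fun i => w (idx₂ n i))
          (∑ i : Fin n, (2 * w (idx₁ n i) * P (idx₂ n i) - 2 * w (idx₂ n i) * P (idx₁ n i))) := by
  apply extH
  · intro j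
    rw [WithLp.ofLp_sum, Finset.sum_apply, mkH_idx₁]
    simp only [Xvf, Yvf, PiLp.add_apply, PiLp.sub_apply, PiLp.smul_apply,
      EuclideanSpace.single_apply, smul_eq_mul, idx₁_eq_idx₁, idx₁_ne_idx₂, idx₁_ne_idxc,
      if_false, mul_zero, add_zero, sub_zero, mul_ite, mul_one]
    simp
  · intro j
    rw [WithLp.ofLp_sum, Finset.sum_apply, mkH_idx₂]
    simp only [Xvf, Yvf, PiLp.add_apply, PiLp.sub_apply, PiLp.smul_apply,
      EuclideanSpace.single_apply, smul_eq_mul, idx₂_eq_idx₂, idx₂_ne_idx₁, idx₂_ne_idxc,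
      if_false, mul_zero, add_zero, sub_zero, mul_ite, mul_one]
    simp
  · rw [WithLp.ofLp_sum, Finset.sum_apply, mkH_idxc]
    refine Finset.sum_congr rfl fun i _ => ?_
    simp only [Xvf, Yvf, PiLp.add_apply, PiLp.sub_apply, PiLp.smul_apply,
      EuclideanSpace.single_apply, smul_eq_mul, idxc_ne_idx₁, idxc_ne_idx₂,
      if_false, if_true, mul_zero, add_zero, sub_zero, mul_ite, mul_one]
    simp
    ring

-- piecewise linear machinery
variable {E : Type*} [NormedAddCommGroup E] [NormedSpace ℝ E] [MeasurableSpace E] [BorelSpace E] [CompleteSpace E] [SecondCountableTopology E]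

/-- piecewise linear curve with one breakpoint -/
def pw (m : ℝ) (Q₁ Q₂ v₁ v₂ : E) : ℝ → E := fun u => if u ≤ m then Q₁ + u • v₁ else Q₂ + u • v₂

def pwd (m : ℝ) (v₁ v₂ : E) : ℝ → E := fun u => if u ≤ m then v₁ else v₂

variable {m : ℝ} {Q₁ Q₂ v₁ v₂ : E}

lemma pw_cont (hC : Q₁ + m • v₁ = Q₂ + m • v₂) : Continuous (pw m Q₁ Q₂ v₁ v₂) := by
  apply Continuous.if_le
  · exact continuous_const.add (continuous_id.smul continuous_const)
  · exact continuous_const.add (continuous_id.smul continuous_const)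
  · exact continuous_id
  · exact continuous_const
  · intro x hx; rw [hx]; exact hC

lemma pw_hasDeriv {u : ℝ} (hu : u ≠ m) :
    HasDerivAt (pw m Q₁ Q₂ v₁ v₂) (pwd m v₁ v₂ u) u := by
  rcases hu.lt_or_gt with h | h
  · have h1 : HasDerivAt (fun u : ℝ => Q₁ + u • v₁) v₁ u := by
      simpa using ((hasDerivAt_id u).smul_const v₁).const_add Q₁
    have he : pw m Q₁ Q₂ v₁ v₂ =ᶠ[nhds u] fun u => Q₁ + u • v₁ :=
      eventually_of_mem (Iio_mem_nhds h) fun x hx => if_pos (le_of_lt hx)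
    have : pwd m v₁ v₂ u = v₁ := if_pos h.le
    rw [this]
    exact h1.congr_of_eventuallyEq he
  · have h1 : HasDerivAt (fun u : ℝ => Q₂ + u • v₂) v₂ u := by
      simpa using ((hasDerivAt_id u).smul_const v₂).const_add Q₂
    have he : pw m Q₁ Q₂ v₁ v₂ =ᶠ[nhds u] fun u => Q₂ + u • v₂ :=
      eventually_of_mem (Ioi_mem_nhds h) fun x hx => if_neg (not_le.2 hx)
    have : pwd m v₁ v₂ u = v₂ := if_neg (not_le.2 h)
    rw [this]
    exact h1.congr_of_eventuallyEq he

lemma pw_deriv {u : ℝ} (hu : u ≠ m) :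
    deriv (pw m Q₁ Q₂ v₁ v₂) u = pwd m v₁ v₂ u := (pw_hasDeriv hu).deriv

lemma ae_ne (m : ℝ) : ∀ᵐ u ∂(volume : Measure ℝ), u ≠ m := by
  rw [ae_iff]
  have : {u : ℝ | ¬ u ≠ m} = {m} := by ext u; simp
  rw [this]
  exact Real.volume_singleton

lemma pwd_integrable (s t : ℝ) : IntervalIntegrable (pwd m v₁ v₂) volume s t := by
  rw [intervalIntegrable_iff]
  apply MeasureTheory.Integrable.mono' (g := fun _ => max ‖v₁‖ ‖v₂‖)
  · exact integrableOn_const measure_Ioc_lt_top.ne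
  · exact ((Measurable.ite measurableSet_Iic measurable_const measurable_const)).aestronglyMeasurable
  · refine ae_of_all _ fun u => ?_
    unfold pwd; split_ifs
    exacts [le_max_left _ _, le_max_right _ _]

lemma pw_deriv_ae : deriv (pw m Q₁ Q₂ v₁ v₂) =ᵐ[(volume : Measure ℝ)] pwd m v₁ v₂ :=
  (ae_ne m).mono fun _ hu => pw_deriv hu

lemma pw_deriv_integrable (s t : ℝ) :
    IntervalIntegrable (deriv (pw m Q₁ Q₂ v₁ v₂)) volume s t := by
  exact (pwd_integrable s t).congr_ae (ae_restrict_of_ae pw_deriv_ae.symm)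

lemma pw_integral (hC : Q₁ + m • v₁ = Q₂ + m • v₂) (s t : ℝ) :
    pw m Q₁ Q₂ v₁ v₂ t - pw m Q₁ Q₂ v₁ v₂ s
      = ∫ u in s..t, deriv (pw m Q₁ Q₂ v₁ v₂) u := by
  refine (MeasureTheory.integral_eq_of_hasDerivAt_off_countable
    (pw m Q₁ Q₂ v₁ v₂) (deriv (pw m Q₁ Q₂ v₁ v₂)) (s := {m}) (Set.countable_singleton m)
    (pw_cont hC).continuousOn (fun x hx => ?_) (pw_deriv_integrable s t)).symm
  have hx2 : x ≠ m := hx.2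
  rw [pw_deriv hx2]
  exact pw_hasDeriv hx2


-- ====== generic sum helpers ======
lemma sum_c {n : ℕ} (A B : Fin n → ℝ) {L : ℝ} (c : ℝ) (p : Fin n → ℝ)
    (hL2 : ∑ i, (A i^2 + B i^2) = L^2)
    (h : ∀ i, p i = c * (A i^2 + B i^2)) : ∑ i, p i = c * L^2 := by
  rw [Finset.sum_congr rfl (fun i _ => h i), ← Finset.mul_sum, hL2]

-- ====== coordinates of w₁, w₂ ======
variable {n : ℕ}

lemma w₁_a (y : H n) (i : Fin n) :
    w₁ n y (idx₁ n i) = y (idx₁ n i) - y (idx₂ n i) * y (idxc n) / ‖proj n y‖^2 := by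
  rw [w₁, mkH_idx₁]

lemma w₁_b (y : H n) (i : Fin n) :
    w₁ n y (idx₂ n i) = y (idx₂ n i) + y (idx₁ n i) * y (idxc n) / ‖proj n y‖^2 := by
  rw [w₁, mkH_idx₂]

lemma w₁_c (y : H n) : w₁ n y (idxc n) = 0 := by rw [w₁, mkH_idxc]

lemma w₂_a (y : H n) (i : Fin n) :
    w₂ n y (idx₁ n i) = y (idx₁ n i) + y (idx₂ n i) * y (idxc n) / ‖proj n y‖^2 := by
  rw [w₂, mkH_idx₁]

lemma w₂_b (y : H n) (i : Fin n) :
    w₂ n y (idx₂ n i) = y (idx₂ n i) - y (idx₁ n i) * y (idxc n) / ‖proj n y‖^2 := by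
  rw [w₂, mkH_idx₂]

lemma w₂_c (y : H n) : w₂ n y (idxc n) = 2 * y (idxc n) := by rw [w₂, mkH_idxc]

lemma hL2y (y : H n) :
    ∑ i, (y (idx₁ n i)^2 + y (idx₂ n i)^2) = ‖proj n y‖^2 := by
  rw [Finset.sum_add_distrib]
  rw [normProj, Real.sq_sqrt (by positivity)]

-- ====== goodCurve as pw ======
def Q2 (y : H n) : H n := (1/2 : ℝ) • w₁ n y - (1/2 : ℝ) • w₂ n y

lemma goodCurve_eq (y : H n) :
    goodCurve n y = pw (1/2) 0 (Q2 y) (w₁ n y) (w₂ n y) := by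
  funext u
  simp only [goodCurve, pw, Q2]
  split_ifs with h
  · rw [zero_add]
  · module

lemma gc_hC (y : H n) :
    (0 : H n) + (1/2:ℝ) • w₁ n y = Q2 y + (1/2:ℝ) • w₂ n y := by
  simp only [Q2, zero_add]; module

-- ====== horizontality of goodCurve ======
def hγ (y : H n) : ℝ → Fin (2*n) → ℝ :=
  fun u k => pwd (1/2) (w₁ n y) (w₂ n y) u ⟨k.1, by have := k.2; omega⟩

lemma gc_horiz (y : H n) (hy : ‖proj n y‖ ≠ 0) {u : ℝ} (hu : u ≠ 1/2) :
    horizCondition n (goodCurve n y) (hγ y) u := by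
  show deriv (goodCurve n y) u
      = ∑ i : Fin n, (pwd (1/2) (w₁ n y) (w₂ n y) u (idx₁ n i) • Xvf n i (goodCurve n y u)
        + pwd (1/2) (w₁ n y) (w₂ n y) u (idx₂ n i) • Yvf n i (goodCurve n y u))
  rw [goodCurve_eq y, pw_deriv hu, sumXY]
  apply extH
  · intro i; rw [mkH_idx₁]
  · intro i; rw [mkH_idx₂]
  · rw [mkH_idxc]
    by_cases h : u ≤ 1/2
    · have e : pwd (1/2 : ℝ) (w₁ n y) (w₂ n y) u = w₁ n y := if_pos h
      rw [e, w₁_c]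
      refine (Finset.sum_eq_zero fun i _ => ?_).symm
      have eP : ∀ k, pw (1/2 : ℝ) 0 (Q2 y) (w₁ n y) (w₂ n y) u k = u * w₁ n y k := by
        intro k
        simp only [pw, if_pos h, PiLp.add_apply, PiLp.smul_apply, PiLp.zero_apply,
          smul_eq_mul, zero_add]
      rw [eP, eP]; ring
    · have e : pwd (1/2 : ℝ) (w₁ n y) (w₂ n y) u = w₂ n y := if_neg h
      rw [e, w₂_c]
      have eP : ∀ k, pw (1/2 : ℝ) 0 (Q2 y) (w₁ n y) (w₂ n y) u k
          = (1/2) * w₁ n y k - (1/2) * w₂ n y k + u * w₂ n y k := by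
        intro k
        simp only [pw, if_neg h, Q2, PiLp.add_apply, PiLp.sub_apply, PiLp.smul_apply,
          smul_eq_mul]
      have key : ∑ i : Fin n, (2 * w₂ n y (idx₁ n i)
            * ((1/2) * w₁ n y (idx₂ n i) - (1/2) * w₂ n y (idx₂ n i) + u * w₂ n y (idx₂ n i))
          - 2 * w₂ n y (idx₂ n i)
            * ((1/2) * w₁ n y (idx₁ n i) - (1/2) * w₂ n y (idx₁ n i) + u * w₂ n y (idx₁ n i)))
          = 2 * y (idxc n) := by
        have h2 := sum_c (fun i => y (idx₁ n i)) (fun i => y (idx₂ n i))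
          (2 * y (idxc n) / ‖proj n y‖^2)
          (fun i => 2 * w₂ n y (idx₁ n i)
            * ((1/2) * w₁ n y (idx₂ n i) - (1/2) * w₂ n y (idx₂ n i) + u * w₂ n y (idx₂ n i))
          - 2 * w₂ n y (idx₂ n i)
            * ((1/2) * w₁ n y (idx₁ n i) - (1/2) * w₂ n y (idx₁ n i) + u * w₂ n y (idx₁ n i)))
          (hL2y y) (fun i => by
            simp only [w₁_a, w₁_b, w₂_a, w₂_b]
            field_simp
            ring)
        rw [h2]
        field_simp
      rw [← key]
      exact Finset.sum_congr rfl fun i _ => by rw [eP, eP]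

-- ====== norms ======
lemma norm_proj_w₁ (y : H n) (hy : ‖proj n y‖ ≠ 0) :
    ‖proj n (w₁ n y)‖
      = Real.sqrt (‖proj n y‖^2 + y (idxc n)^2 / ‖proj n y‖^2) := by
  rw [normProj]
  congr 1
  rw [← Finset.sum_add_distrib]
  have h2 := sum_c (fun i => y (idx₁ n i)) (fun i => y (idx₂ n i))
    (1 + y (idxc n)^2 / ‖proj n y‖^4)
    (fun i => w₁ n y (idx₁ n i)^2 + w₁ n y (idx₂ n i)^2) (hL2y y) (fun i => by
      simp only [w₁_a, w₁_b]; field_simp; ring)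
  rw [h2]
  field_simp

lemma norm_proj_w₂ (y : H n) (hy : ‖proj n y‖ ≠ 0) :
    ‖proj n (w₂ n y)‖
      = Real.sqrt (‖proj n y‖^2 + y (idxc n)^2 / ‖proj n y‖^2) := by
  rw [normProj]
  congr 1
  rw [← Finset.sum_add_distrib]
  have h2 := sum_c (fun i => y (idx₁ n i)) (fun i => y (idx₂ n i))
    (1 + y (idxc n)^2 / ‖proj n y‖^4)
    (fun i => w₂ n y (idx₁ n i)^2 + w₂ n y (idx₂ n i)^2) (hL2y y) (fun i => by
      simp only [w₂_a, w₂_b]; field_simp; ring)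
  rw [h2]
  field_simp

-- ====== length of pw pieces ======
lemma pw_hLength {m : ℝ} {Q₁ Q₂ v₁ v₂ : H n} {N : ℝ}
    (h₁ : ‖proj n v₁‖ = N) (h₂ : ‖proj n v₂‖ = N) {s t : ℝ} (hst : s ≤ t) :
    hLength n (Set.Icc s t) (pw m Q₁ Q₂ v₁ v₂) = N * (t - s) := by
  unfold hLength
  have h0 : ∀ᵐ u ∂(volume.restrict (Set.Icc s t)), u ≠ m := ae_restrict_of_ae (ae_ne m)
  rw [integral_congr_ae (g := fun _ => N) (h0.mono fun u hu => by
    rw [pw_deriv hu]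
    unfold pwd; split_ifs
    exacts [h₁, h₂])]
  rw [setIntegral_const, Real.volume_real_Icc, smul_eq_mul,
    max_eq_left (by linarith), mul_comm]

-- ====== ccDist bound via an explicit curve ======
lemma ccDist_le {x z : H n} {s t : ℝ} (hst : s < t) (σ : ℝ → H n)
    (hcurve : IsHorizontalCurve n (Set.Icc s t) σ) (hxs : σ s = x) (hzt : σ t = z)
    {Bd : ℝ} (hlen : hLength n (Set.Icc s t) σ ≤ Bd) : ccDist n x z ≤ Bd := by
  refine le_trans (csInf_le ⟨0, ?_⟩ ⟨s, t, σ, hst, hcurve, hxs, hzt, rfl⟩) hlen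
  rintro Len ⟨a, b, γ, hab, hγ', ha, hb, hL⟩
  rw [hL]
  exact integral_nonneg fun u => norm_nonneg _

lemma pw_isHC {m : ℝ} {Q₁ Q₂ v₁ v₂ : H n} (hC : Q₁ + m • v₁ = Q₂ + m • v₂) (I : Set ℝ)
    (h : ℝ → Fin (2*n) → ℝ)
    (hhoriz : ∀ u, u ≠ m → horizCondition n (pw m Q₁ Q₂ v₁ v₂) h u) :
    IsHorizontalCurve n I (pw m Q₁ Q₂ v₁ v₂) := by
  refine ⟨⟨?_, ?_⟩, h, ?_⟩
  · exact ae_restrict_of_ae ((ae_ne m).mono fun u hu => (pw_hasDeriv hu).differentiableAt)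
  · intro s hs t ht; exact ⟨pw_deriv_integrable s t, pw_integral hC s t⟩
  · exact ae_restrict_of_ae ((ae_ne m).mono fun u hu => hhoriz u hu)

-- ====== constant curve ======
lemma const_eq_pw (x : H n) : (fun _ : ℝ => x) = pw 0 x x 0 0 := by
  funext u; simp [pw]

lemma const_isHC (x : H n) : IsHorizontalCurve n (Set.Icc 0 1) (fun _ : ℝ => x) := by
  rw [const_eq_pw x]
  refine pw_isHC (by simp) _ (fun _ _ => 0) (fun u hu => ?_)
  show deriv (pw 0 x x 0 0) u
      = ∑ i : Fin n, ((0:ℝ) • Xvf n i (pw 0 x x 0 0 u) + (0:ℝ) • Yvf n i (pw 0 x x 0 0 u))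
  rw [pw_deriv hu]
  simp [pwd]

lemma proj_zero : proj n (0 : H n) = 0 := by
  ext k; simp [proj]

lemma proj_neg (x : H n) : proj n (-x) = -(proj n x) := by
  ext k; simp [proj]

lemma ccDist_self (x : H n) : ccDist n x x ≤ 0 := by
  refine ccDist_le (by norm_num : (0:ℝ) < 1) _ (const_isHC x) rfl rfl ?_
  rw [const_eq_pw x, pw_hLength (N := ‖proj n (0 : H n)‖) rfl rfl zero_le_one]
  simp [proj_zero]

-- ====== norms of derivative differences ======
lemma norm_w₁_sub (y : H n) (hy : ‖proj n y‖ ≠ 0) :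
    ‖w₁ n y - mkH n (fun i => y (idx₁ n i)) (fun i => y (idx₂ n i)) 0‖
      = Real.sqrt (y (idxc n)^2 / ‖proj n y‖^2) := by
  rw [normH]
  congr 1
  rw [← Finset.sum_add_distrib]
  have h2 := sum_c (fun i => y (idx₁ n i)) (fun i => y (idx₂ n i))
    (y (idxc n)^2 / ‖proj n y‖^4)
    (fun i => (w₁ n y - mkH n (fun i => y (idx₁ n i)) (fun i => y (idx₂ n i)) 0) (idx₁ n i)^2
      + (w₁ n y - mkH n (fun i => y (idx₁ n i)) (fun i => y (idx₂ n i)) 0) (idx₂ n i)^2)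
    (hL2y y) (fun i => by
      simp only [PiLp.sub_apply, w₁_a, w₁_b, mkH_idx₁, mkH_idx₂]
      field_simp; ring)
  rw [h2]
  simp only [PiLp.sub_apply, w₁_c, mkH_idxc]
  field_simp
  ring

lemma norm_w₂_sub (y : H n) (hy : ‖proj n y‖ ≠ 0) :
    ‖w₂ n y - mkH n (fun i => y (idx₁ n i)) (fun i => y (idx₂ n i)) 0‖
      = Real.sqrt (y (idxc n)^2 / ‖proj n y‖^2 + 4 * y (idxc n)^2) := by
  rw [normH]
  congr 1
  rw [← Finset.sum_add_distrib]
  have h2 := sum_c (fun i => y (idx₁ n i)) (fun i => y (idx₂ n i))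
    (y (idxc n)^2 / ‖proj n y‖^4)
    (fun i => (w₂ n y - mkH n (fun i => y (idx₁ n i)) (fun i => y (idx₂ n i)) 0) (idx₁ n i)^2
      + (w₂ n y - mkH n (fun i => y (idx₁ n i)) (fun i => y (idx₂ n i)) 0) (idx₂ n i)^2)
    (hL2y y) (fun i => by
      simp only [PiLp.sub_apply, w₂_a, w₂_b, mkH_idx₁, mkH_idx₂]
      field_simp; ring)
  rw [h2]
  simp only [PiLp.sub_apply, w₂_c, mkH_idxc]
  field_simp
  ring

lemma bound₁ (y : H n) (hL0 : 0 < ‖proj n y‖) :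
    Real.sqrt (y (idxc n)^2 / ‖proj n y‖^2)
      ≤ |y (idxc n)| / ‖proj n y‖ * Real.sqrt (1 + 4 * ‖proj n y‖^2) := by
  have h1 : Real.sqrt (y (idxc n)^2 / ‖proj n y‖^2) = |y (idxc n)| / ‖proj n y‖ := by
    rw [show y (idxc n)^2 / ‖proj n y‖^2 = (|y (idxc n)| / ‖proj n y‖)^2 by
      rw [div_pow, sq_abs]]
    exact Real.sqrt_sq (by positivity)
  rw [h1]
  refine le_mul_of_one_le_right (by positivity) ?_
  exact (Real.le_sqrt' one_pos).2 (by nlinarith [sq_nonneg ‖proj n y‖])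

lemma bound₂ (y : H n) (hL0 : 0 < ‖proj n y‖) :
    Real.sqrt (y (idxc n)^2 / ‖proj n y‖^2 + 4 * y (idxc n)^2)
      = |y (idxc n)| / ‖proj n y‖ * Real.sqrt (1 + 4 * ‖proj n y‖^2) := by
  have h1 : |y (idxc n)| / ‖proj n y‖ = Real.sqrt (y (idxc n)^2 / ‖proj n y‖^2) := by
    rw [show y (idxc n)^2 / ‖proj n y‖^2 = (|y (idxc n)| / ‖proj n y‖)^2 by
      rw [div_pow, sq_abs]]
    exact (Real.sqrt_sq (by positivity)).symm
  rw [h1, ← Real.sqrt_mul (by positivity)]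
  congr 1
  field_simp

lemma NK (y : H n) (hL0 : 0 < ‖proj n y‖) :
    Real.sqrt (‖proj n y‖^2 + y (idxc n)^2 / ‖proj n y‖^2)
      ≤ ‖proj n y‖ * Real.sqrt (1 + y (idxc n)^2 / ‖proj n y‖^4
          + 4 * y (idxc n)^2 / ‖proj n y‖^2) := by
  have h1 : Real.sqrt (‖proj n y‖^2 * (1 + y (idxc n)^2 / ‖proj n y‖^4
        + 4 * y (idxc n)^2 / ‖proj n y‖^2))
      = ‖proj n y‖ * Real.sqrt (1 + y (idxc n)^2 / ‖proj n y‖^4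
        + 4 * y (idxc n)^2 / ‖proj n y‖^2) := by
    rw [Real.sqrt_mul (sq_nonneg _), Real.sqrt_sq hL0.le]
  rw [← h1]
  apply Real.sqrt_le_sqrt
  have he : ‖proj n y‖^2 * (1 + y (idxc n)^2 / ‖proj n y‖^4 + 4 * y (idxc n)^2 / ‖proj n y‖^2)
      = ‖proj n y‖^2 + y (idxc n)^2 / ‖proj n y‖^2 + 4 * y (idxc n)^2 := by
    field_simp
  rw [he]
  nlinarith [sq_nonneg (y (idxc n))]

-- ====== reversed curve ======
def R1 (y : H n) (s t : ℝ) : H n := (1/2:ℝ) • w₁ n y + (s+t-1/2) • w₂ n y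
def R2 (y : H n) (s t : ℝ) : H n := (s+t) • w₁ n y
def rev (y : H n) (s t : ℝ) : ℝ → H n :=
  pw (s+t-1/2) (R1 y s t) (R2 y s t) (-(w₂ n y)) (-(w₁ n y))

lemma rev_hC (y : H n) (s t : ℝ) :
    R1 y s t + (s+t-1/2) • (-(w₂ n y)) = R2 y s t + (s+t-1/2) • (-(w₁ n y)) := by
  simp only [R1, R2]; module

lemma rev_eq (y : H n) (s t : ℝ) (u : ℝ) : rev y s t u = goodCurve n y (s+t-u) := by
  simp only [rev, pw, goodCurve, R1, R2]
  by_cases h1 : u ≤ s+t-1/2 <;> by_cases h2 : s+t-u ≤ 1/2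
  · have h3 : u = s+t-1/2 := by linarith
    rw [if_pos h1, if_pos h2, h3]; module
  · rw [if_pos h1, if_neg h2]; module
  · rw [if_neg h1, if_pos h2]; module
  · exact absurd (by linarith : s+t-u ≤ 1/2) h2

def hδ (y : H n) (s t : ℝ) : ℝ → Fin (2*n) → ℝ :=
  fun u k => pwd (s+t-1/2) (-(w₂ n y)) (-(w₁ n y)) u ⟨k.1, by have := k.2; omega⟩

lemma rev_horiz (y : H n) (hy : ‖proj n y‖ ≠ 0) (s t : ℝ) {u : ℝ} (hu : u ≠ s+t-1/2) :
    horizCondition n (rev y s t) (hδ y s t) u := by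
  show deriv (rev y s t) u
      = ∑ i : Fin n, (pwd (s+t-1/2) (-(w₂ n y)) (-(w₁ n y)) u (idx₁ n i) • Xvf n i (rev y s t u)
        + pwd (s+t-1/2) (-(w₂ n y)) (-(w₁ n y)) u (idx₂ n i) • Yvf n i (rev y s t u))
  rw [rev, pw_deriv hu, sumXY]
  apply extH
  · intro i; rw [mkH_idx₁]
  · intro i; rw [mkH_idx₂]
  · rw [mkH_idxc]
    by_cases h : u ≤ s+t-1/2
    · have e : pwd (s+t-1/2) (-(w₂ n y)) (-(w₁ n y)) u = -(w₂ n y) := if_pos h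
      rw [e]
      have eP : ∀ k, pw (s+t-1/2) (R1 y s t) (R2 y s t) (-(w₂ n y)) (-(w₁ n y)) u k
          = (1/2) * w₁ n y k + (s+t-1/2) * w₂ n y k - u * w₂ n y k := by
        intro k
        simp only [pw, if_pos h, R1, PiLp.add_apply, PiLp.smul_apply, PiLp.neg_apply,
          smul_eq_mul]
        ring
      have key : ∑ i : Fin n, (2 * (-(w₂ n y)) (idx₁ n i)
            * ((1/2) * w₁ n y (idx₂ n i) + (s+t-1/2) * w₂ n y (idx₂ n i) - u * w₂ n y (idx₂ n i))
          - 2 * (-(w₂ n y)) (idx₂ n i)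
            * ((1/2) * w₁ n y (idx₁ n i) + (s+t-1/2) * w₂ n y (idx₁ n i) - u * w₂ n y (idx₁ n i)))
          = -(2 * y (idxc n)) := by
        have h2 := sum_c (fun i => y (idx₁ n i)) (fun i => y (idx₂ n i))
          (-(2 * y (idxc n)) / ‖proj n y‖^2)
          (fun i => 2 * (-(w₂ n y)) (idx₁ n i)
            * ((1/2) * w₁ n y (idx₂ n i) + (s+t-1/2) * w₂ n y (idx₂ n i) - u * w₂ n y (idx₂ n i))
          - 2 * (-(w₂ n y)) (idx₂ n i)
            * ((1/2) * w₁ n y (idx₁ n i) + (s+t-1/2) * w₂ n y (idx₁ n i) - u * w₂ n y (idx₁ n i)))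
          (hL2y y) (fun i => by
            simp only [PiLp.neg_apply, w₁_a, w₁_b, w₂_a, w₂_b]
            field_simp
            ring)
        rw [h2]
        field_simp
      have e3 : (-(w₂ n y)) (idxc n) = -(2 * y (idxc n)) := by
        simp [PiLp.neg_apply, w₂_c]
      rw [e3, ← key]
      refine Finset.sum_congr rfl fun i _ => ?_
      rw [eP, eP]
    · have e : pwd (s+t-1/2) (-(w₂ n y)) (-(w₁ n y)) u = -(w₁ n y) := if_neg h
      rw [e]
      have eP : ∀ k, pw (s+t-1/2) (R1 y s t) (R2 y s t) (-(w₂ n y)) (-(w₁ n y)) u k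
          = (s+t) * w₁ n y k - u * w₁ n y k := by
        intro k
        simp only [pw, if_neg h, R2, PiLp.add_apply, PiLp.smul_apply, PiLp.neg_apply,
          smul_eq_mul]
        ring
      have e2 : (-(w₁ n y)) (idxc n) = 0 := by
        simp [PiLp.neg_apply, w₁_c]
      rw [e2]
      refine (Finset.sum_eq_zero fun i _ => ?_).symm
      rw [eP, eP]
      simp only [PiLp.neg_apply]
      ring

end Aux

/-- Lemma `goodcurve`. For `y = (a,b,c) ∈ ℍⁿ` with `p(y) ≠ 0` and
`L = |p(y)|`, the explicit piecewise-linear curve `γ_y` is a Lipschitz horizontal curve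
joining `0` to `y` with `Lip_ℍ(γ) ≤ L(1 + c²/L⁴ + 4c²/L²)^{1/2}`, and for all
`t ∈ [0,1] \ {1/2}` the derivative `γ'(t)` exists with
`|γ'(t) − (a,b,0)| ≤ (|c|/L)(1 + 4L²)^{1/2}`. -/
theorem statement5 (n : ℕ) (hn : 0 < n) (y : H n) (hy : Heis.proj n y ≠ 0) :
    Heis.IsHorizontalCurve n (Set.Icc 0 1) (Heis.goodCurve n y) ∧
    Heis.goodCurve n y 0 = 0 ∧ Heis.goodCurve n y 1 = y ∧
    (∀ s ∈ Set.Icc (0:ℝ) 1, ∀ t ∈ Set.Icc (0:ℝ) 1,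
      Heis.ccDist n (Heis.goodCurve n y s) (Heis.goodCurve n y t) ≤
        ‖Heis.proj n y‖ * Real.sqrt (1 + (y (Heis.idxc n))^2 / ‖Heis.proj n y‖^4
          + 4 * (y (Heis.idxc n))^2 / ‖Heis.proj n y‖^2) * |s - t|) ∧
    (∀ t ∈ Set.Icc (0:ℝ) 1 \ {(1:ℝ)/2}, ∃ g' : H n,
      HasDerivAt (Heis.goodCurve n y) g' t ∧
      ‖g' - Heis.mkH n (fun i => y (Heis.idx₁ n i)) (fun i => y (Heis.idx₂ n i)) 0‖ ≤
        |y (Heis.idxc n)| / ‖Heis.proj n y‖ * Real.sqrt (1 + 4 * ‖Heis.proj n y‖^2)) := by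
  have hy' : ‖Heis.proj n y‖ ≠ 0 := norm_ne_zero_iff.2 hy
  have hL0 : 0 < ‖Heis.proj n y‖ := lt_of_le_of_ne (norm_nonneg _) (Ne.symm hy')
  have hHC : ∀ I : Set ℝ, Heis.IsHorizontalCurve n I (Heis.goodCurve n y) := by
    intro I
    rw [Aux.goodCurve_eq y]
    exact Aux.pw_isHC (Aux.gc_hC y) I (Aux.hγ y)
      (fun u hu => Aux.goodCurve_eq y ▸ Aux.gc_horiz y hy' hu)
  refine ⟨hHC _, ?_, ?_, ?_, ?_⟩
  · -- goodCurve 0 = 0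
    show (if (0:ℝ) ≤ 1/2 then (0:ℝ) • Heis.w₁ n y
      else (1/2 : ℝ) • Heis.w₁ n y + ((0:ℝ) - 1/2) • Heis.w₂ n y) = 0
    rw [if_pos (by norm_num : (0:ℝ) ≤ 1/2), zero_smul]
  · -- goodCurve 1 = y
    show (if (1:ℝ) ≤ 1/2 then (1:ℝ) • Heis.w₁ n y
      else (1/2 : ℝ) • Heis.w₁ n y + ((1:ℝ) - 1/2) • Heis.w₂ n y) = y
    rw [if_neg (by norm_num : ¬ (1:ℝ) ≤ 1/2)]
    apply Aux.extH
    · intro i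
      simp only [PiLp.add_apply, PiLp.smul_apply, smul_eq_mul, Aux.w₁_a, Aux.w₂_a]
      ring
    · intro i
      simp only [PiLp.add_apply, PiLp.smul_apply, smul_eq_mul, Aux.w₁_b, Aux.w₂_b]
      ring
    · simp only [PiLp.add_apply, PiLp.smul_apply, smul_eq_mul, Aux.w₁_c, Aux.w₂_c]
      ring
  · -- Lipschitz estimate
    intro s hs t ht
    have hKnonneg : 0 ≤ ‖Heis.proj n y‖ * Real.sqrt (1 + (y (Heis.idxc n))^2 / ‖Heis.proj n y‖^4
        + 4 * (y (Heis.idxc n))^2 / ‖Heis.proj n y‖^2) := by positivity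
    rcases lt_trichotomy s t with hst | hst | hst
    · refine Aux.ccDist_le hst _ (hHC (Set.Icc s t)) rfl rfl ?_
      rw [Aux.goodCurve_eq y,
        Aux.pw_hLength (Aux.norm_proj_w₁ y hy') (Aux.norm_proj_w₂ y hy') hst.le]
      rw [abs_sub_comm, abs_of_pos (by linarith : (0:ℝ) < t - s)]
      exact mul_le_mul_of_nonneg_right (Aux.NK y hL0) (by linarith)
    · rw [hst, sub_self, abs_zero, mul_zero]
      exact Aux.ccDist_self _
    · refine Aux.ccDist_le hst (Aux.rev y s t) ?_ ?_ ?_ ?_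
      · exact Aux.pw_isHC (Aux.rev_hC y s t) _ (Aux.hδ y s t)
          (fun u hu => Aux.rev_horiz y hy' s t hu)
      · rw [Aux.rev_eq y s t t, show s + t - t = s by ring]
      · rw [Aux.rev_eq y s t s, show s + t - s = t by ring]
      · rw [show Aux.rev y s t
            = Aux.pw (s+t-1/2) (Aux.R1 y s t) (Aux.R2 y s t) (-(Heis.w₂ n y)) (-(Heis.w₁ n y))
            from rfl,
          Aux.pw_hLength (N := Real.sqrt (‖Heis.proj n y‖^2
            + y (Heis.idxc n)^2 / ‖Heis.proj n y‖^2))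
            (by rw [Aux.proj_neg, norm_neg]; exact Aux.norm_proj_w₂ y hy')
            (by rw [Aux.proj_neg, norm_neg]; exact Aux.norm_proj_w₁ y hy') hst.le]
        rw [abs_of_pos (by linarith : (0:ℝ) < s - t)]
        exact mul_le_mul_of_nonneg_right (Aux.NK y hL0) (by linarith)
  · -- derivative estimate
    rintro t ⟨ht, ht2⟩
    have htne : t ≠ 1/2 := by simpa using ht2
    refine ⟨Aux.pwd (1/2) (Heis.w₁ n y) (Heis.w₂ n y) t, ?_, ?_⟩
    · rw [Aux.goodCurve_eq y]
      exact Aux.pw_hasDeriv htne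
    · by_cases h : t ≤ 1/2
      · rw [show Aux.pwd (1/2 : ℝ) (Heis.w₁ n y) (Heis.w₂ n y) t = Heis.w₁ n y from if_pos h,
          Aux.norm_w₁_sub y hy']
        exact Aux.bound₁ y hL0
      · rw [show Aux.pwd (1/2 : ℝ) (Heis.w₁ n y) (Heis.w₂ n y) t = Heis.w₂ n y from if_neg h,
          Aux.norm_w₂_sub y hy']
        exact le_of_eq (Aux.bound₂ y hL0)
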